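/- Let K ≥ 2, 1 ≤ t < K, t ≤ α ≤ K - t. Fix a pair (p,k) with V[p,k] = 0, where V is the cyclic placement matrix. Then there exists exactly one round r ∈ [K] such that k appears among the last α entries of some user vector k_j^r with corresponding packet index p, namely the entries arising from the horizontal-shift (second) component; and in that round there are exactly α transmission indices j ∈ [K-t] delivering packet p to user k. -/

import Mathlib

/-- The mod operator with offset one. -/
def pmod (a b : ℕ) : ℕ := (a - 1) % b + 1

/-- The cyclic placement matrix: `V K t p k = 1` iff `(k - p) mod K ∈ {0,…,t-1}`. -/
noncomputable def V (K t p k : ℕ) : ℕ :=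
  if ((k : ℤ) - (p : ℤ)) % (K : ℤ) ∈ Finset.Ico (0 : ℤ) (t : ℤ) then 1 else 0

/-- Entry `n` of the round-1 user index vector `k_j¹`. -/
def kvec1 (K t j n : ℕ) : ℕ :=
  if n ≤ t then n else pmod (n - t + j - 1) (K - t) + t

/-- Entry `n` of the round-1 packet index vector `p_j¹`. -/
def pvec1 (K t j n : ℕ) : ℕ :=
  if n ≤ t then pmod (t + j - n) (K - t) + n else 1

/-- Entry `n` of the round-`r` user index vector `k_j^r = (k_j¹ + r) % K`. -/
def kvec (K t j r n : ℕ) : ℕ := pmod (kvec1 K t j n + r) K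

/-- Entry `n` of the round-`r` packet index vector `p_j^r = (p_j¹ + r) % K`. -/
def pvec (K t j r n : ℕ) : ℕ := pmod (pvec1 K t j n + r) K

section Helpers

private lemma mod_inj' {q a b : ℕ} (hq : 0 < q) (h : a % q = b % q) (h1 : a < b + q)
    (h2 : b < a + q) : a = b := by
  rcases le_total a b with hab | hab
  · have hd : q ∣ b - a := (Nat.modEq_iff_dvd' hab).1 h
    have := Nat.eq_zero_of_dvd_of_lt hd (by omega)
    omega
  · have hd : q ∣ a - b := (Nat.modEq_iff_dvd' hab).1 h.symm
    have := Nat.eq_zero_of_dvd_of_lt hd (by omega)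
    omega

private lemma pv {K t j r n : ℕ} (hn : t + 1 ≤ n) : pvec K t j r n = r % K + 1 := by
  unfold pvec pvec1 pmod
  rw [if_neg (show ¬ n ≤ t by omega)]
  congr 2
  omega

private lemma kv {K t j r n : ℕ} (hn : t + 1 ≤ n) (hj : 1 ≤ j) :
    kvec K t j r n = ((n - t - 1 + (j - 1)) % (K - t) + t + r) % K + 1 := by
  unfold kvec kvec1 pmod
  rw [if_neg (show ¬ n ≤ t by omega)]
  have h1 : n - t + j - 1 - 1 = n - t - 1 + (j - 1) := by omega
  rw [h1]
  congr 2
  generalize (n - t - 1 + (j - 1)) % (K - t) = e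
  omega

end Helpers

theorem horizontal_component_counting (K t α : ℕ) (hK : 2 ≤ K) (ht : 1 ≤ t) (htK : t < K)
    (htα : t ≤ α) (hαK : α ≤ K - t) (p k : ℕ) (hp : p ∈ Finset.Icc 1 K)
    (hk : k ∈ Finset.Icc 1 K) (hzero : V K t p k = 0) :
    ((Finset.Icc 1 K).filter (fun r => ∃ j ∈ Finset.Icc 1 (K - t),
        ∃ n ∈ Finset.Icc (t + 1) (t + α),
          p = pvec K t j r n ∧ k = kvec K t j r n)).card = 1 ∧
    ∀ r ∈ Finset.Icc 1 K,
      (∃ j ∈ Finset.Icc 1 (K - t), ∃ n ∈ Finset.Icc (t + 1) (t + α),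
          p = pvec K t j r n ∧ k = kvec K t j r n) →
      ((Finset.Icc 1 (K - t)).filter (fun j => ∃ n ∈ Finset.Icc (t + 1) (t + α),
          p = pvec K t j r n ∧ k = kvec K t j r n)).card = α := by
  rw [Finset.mem_Icc] at hp hk
  obtain ⟨hp1, hpK⟩ := hp
  obtain ⟨hk1, hkK⟩ := hk
  have hq : 1 ≤ K - t := by omega
  have hK0 : 0 < K := by omega
  have hq0 : 0 < K - t := hq
  -- Extract the cyclic distance `d` from `V = 0`.
  have hVD : ¬ (((k : ℤ) - p) % K ∈ Finset.Ico (0 : ℤ) (t : ℤ)) := by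
    intro h
    simp only [V, if_pos h] at hzero
    exact one_ne_zero hzero
  rw [Finset.mem_Ico] at hVD
  have hKZ : (K : ℤ) ≠ 0 := by exact_mod_cast hK0.ne'
  have hD0 : (0 : ℤ) ≤ ((k : ℤ) - p) % K := Int.emod_nonneg _ hKZ
  have hDK : ((k : ℤ) - p) % K < K := Int.emod_lt_of_pos _ (by exact_mod_cast hK0)
  have hDt : (t : ℤ) ≤ ((k : ℤ) - p) % K := by omega
  obtain ⟨d, hd⟩ : ∃ d : ℕ, (d : ℤ) = ((k : ℤ) - p) % K :=
    ⟨(((k : ℤ) - p) % K).toNat, Int.toNat_of_nonneg hD0⟩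
  have hdt : t ≤ d := by omega
  have hdK : d < K := by omega
  set c : ℕ := d - t with hc_def
  have hc : c < K - t := by omega
  -- The key congruence fact.
  have star : ∀ r : ℕ, r % K = p - 1 → (c + t + r) % K = k - 1 := by
    intro r hr
    have h1 : c + t = d := by omega
    rw [h1]
    have h2 : (d + r) % K = (d + (p - 1)) % K := by
      rw [Nat.add_mod d r K, hr, Nat.mod_add_mod]
    rw [h2]
    have hz : (((d + (p - 1)) % K : ℕ) : ℤ) = (k : ℤ) - 1 := by
      push_cast [Nat.cast_sub hp1]
      rw [hd, Int.emod_add_emod]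
      have h3 : (k : ℤ) - p + ((p : ℤ) - 1) = (k : ℤ) - 1 := by ring
      rw [h3]
      exact Int.emod_eq_of_lt (by omega) (by omega)
    omega
  -- The canonical round index.
  set r₀ : ℕ := if p = 1 then K else p - 1 with hr₀_def
  have hr₀ : 1 ≤ r₀ ∧ r₀ ≤ K ∧ r₀ % K = p - 1 := by
    rw [hr₀_def]
    split
    · refine ⟨by omega, le_refl _, ?_⟩
      rw [Nat.mod_self]; omega
    · exact ⟨by omega, by omega, Nat.mod_eq_of_lt (by omega)⟩
  obtain ⟨hr₀1, hr₀K, hr₀m⟩ := hr₀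
  -- The transmission index map.
  set jfun : ℕ → ℕ := fun n => (c + (K - t) - (n - t - 1)) % (K - t) + 1 with hjfun_def
  have hjfun_lt : ∀ n, jfun n - 1 < K - t := by
    intro n
    simp only [hjfun_def]
    have := Nat.mod_lt (c + (K - t) - (n - t - 1)) hq0
    omega
  have hjfun_ge : ∀ n, 1 ≤ jfun n := by
    intro n
    simp only [hjfun_def]
    omega
  have keyfact : ∀ n, t + 1 ≤ n → n ≤ t + α →
      (n - t - 1 + (jfun n - 1)) % (K - t) = c := by
    intro n hn1 hn2
    have hs : n - t - 1 ≤ c + (K - t) := by omega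
    simp only [hjfun_def, Nat.add_sub_cancel]
    rw [Nat.add_mod_mod]
    have h4 : n - t - 1 + (c + (K - t) - (n - t - 1)) = c + (K - t) := by omega
    rw [h4, Nat.add_mod_right, Nat.mod_eq_of_lt hc]
  -- Part 2, in abstract form.
  have part2 : ∀ r : ℕ, r % K = p - 1 →
      ((Finset.Icc 1 (K - t)).filter (fun j => ∃ n ∈ Finset.Icc (t + 1) (t + α),
          p = pvec K t j r n ∧ k = kvec K t j r n)).card = α := by
    intro r hr
    have hpr : p = r % K + 1 := by omega
    have himg : (Finset.Icc 1 (K - t)).filter (fun j => ∃ n ∈ Finset.Icc (t + 1) (t + α),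
        p = pvec K t j r n ∧ k = kvec K t j r n) =
        (Finset.Icc (t + 1) (t + α)).image jfun := by
      ext j
      simp only [Finset.mem_filter, Finset.mem_image, Finset.mem_Icc]
      constructor
      · rintro ⟨⟨hj1, hjq⟩, n, ⟨hn1, hn2⟩, hpv, hkv⟩
        refine ⟨n, ⟨hn1, hn2⟩, ?_⟩
        rw [kv hn1 hj1] at hkv
        have e1 := star r hr
        have hlt : (n - t - 1 + (j - 1)) % (K - t) < K - t :=
          Nat.mod_lt _ hq0
        have h2 : ((n - t - 1 + (j - 1)) % (K - t) + t + r) % K = (c + t + r) % K := by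
          omega
        have h3 := mod_inj' hK0 h2 (by omega) (by omega)
        have heq : (n - t - 1 + (j - 1)) % (K - t) = c := by omega
        have hkey := keyfact n hn1 hn2
        have h5 : n - t - 1 + (jfun n - 1) = n - t - 1 + (j - 1) := by
          apply mod_inj' hq0 (by rw [hkey, heq]) (by have := hjfun_lt n; omega)
            (by have := hjfun_lt n; omega)
        have := hjfun_lt n
        have := hjfun_ge n
        omega
      · rintro ⟨n, ⟨hn1, hn2⟩, rfl⟩
        have hkey := keyfact n hn1 hn2
        refine ⟨⟨hjfun_ge n, by have := hjfun_lt n; have := hjfun_ge n; omega⟩,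
          n, ⟨hn1, hn2⟩, ?_, ?_⟩
        · rw [pv hn1]; exact hpr
        · rw [kv hn1 (hjfun_ge n), hkey]
          have := star r hr
          omega
    rw [himg, Finset.card_image_of_injOn, Nat.card_Icc]
    · omega
    · intro n1 h1 n2 h2 hje
      simp only [Finset.coe_Icc, Set.mem_Icc] at h1 h2
      simp only [hjfun_def] at hje
      have hje' : (c + (K - t) - (n1 - t - 1)) % (K - t) =
          (c + (K - t) - (n2 - t - 1)) % (K - t) := by omega
      have := mod_inj' hq0 hje' (by omega) (by omega)
      omega
  -- Part 1: the filtered set of rounds is exactly {r₀}.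
  have part1 : (Finset.Icc 1 K).filter (fun r => ∃ j ∈ Finset.Icc 1 (K - t),
      ∃ n ∈ Finset.Icc (t + 1) (t + α),
        p = pvec K t j r n ∧ k = kvec K t j r n) = {r₀} := by
    ext r
    simp only [Finset.mem_filter, Finset.mem_Icc, Finset.mem_singleton]
    constructor
    · rintro ⟨⟨hr1, hrK⟩, j, hj, n, hn, hpv, hkv⟩
      rw [pv hn.1] at hpv
      rcases eq_or_lt_of_le hrK with h | h
      · have : r % K = 0 := by rw [h, Nat.mod_self]
        have hp1' : p = 1 := by omega
        rw [hr₀_def, if_pos hp1']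
        omega
      · have : r % K = r := Nat.mod_eq_of_lt h
        rw [hr₀_def, if_neg (by omega)]
        omega
    · rintro rfl
      refine ⟨⟨hr₀1, hr₀K⟩, c + 1, ⟨by omega, by omega⟩, t + 1,
        ⟨le_refl _, by omega⟩, ?_, ?_⟩
      · rw [pv (le_refl _)]; omega
      · rw [kv (le_refl _) (by omega)]
        have h6 : t + 1 - t - 1 + (c + 1 - 1) = c := by omega
        rw [h6, Nat.mod_eq_of_lt hc]
        have := star r₀ hr₀m
        omega
  refine ⟨by rw [part1]; rfl, ?_⟩
  intro r hr hex
  obtain ⟨j, hj, n, hn, hpv, _⟩ := hex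
  rw [Finset.mem_Icc] at hn
  rw [pv hn.1] at hpv
  exact part2 r (by omega)
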